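/- Let V = ℝ⁶ with standard basis e₁,…,e₆ and dual basis e¹,…,e⁶, let ρ⁺ = e¹³⁵ − e¹⁴⁶ − e²³⁶ − e²⁴⁵, and let J be the complex structure on V defined by J(e₁) = e₂, J(e₂) = −e₁, J(e₃) = e₄, J(e₄) = −e₃, J(e₅) = e₆, J(e₆) = −e₅. Then for a linear endomorphism D of V, θ(D)ρ⁺ = 0 if and only if D is the real representation of an element of 𝔰𝔩(3,ℂ), i.e. if and only if D∘J = J∘D, tr(D) = 0, and tr(J∘D) = 0. -/

import Mathlib

/-- The standard basis vectors of `ℝ⁶ = Fin 6 → ℝ`. -/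
noncomputable def stdB6 : Fin 6 → (Fin 6 → ℝ) := fun i => Pi.basisFun ℝ (Fin 6) i

/-- Coefficients of `ρ⁺ = e¹³⁵ − e¹⁴⁶ − e²³⁶ − e²⁴⁵` on increasing basis triples
(0-indexed). -/
def rhoPlusCoeff : Fin 6 → Fin 6 → Fin 6 → ℝ := fun i j k =>
  if (i, j, k) = ((0 : Fin 6), (2 : Fin 6), (4 : Fin 6)) then 1
  else if (i, j, k) = ((0 : Fin 6), (3 : Fin 6), (5 : Fin 6)) then -1
  else if (i, j, k) = ((1 : Fin 6), (2 : Fin 6), (5 : Fin 6)) then -1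
  else if (i, j, k) = ((1 : Fin 6), (3 : Fin 6), (4 : Fin 6)) then -1
  else 0

/-- `(θ(D)γ)(X,Y,Z) = −γ(DX,Y,Z) − γ(X,DY,Z) − γ(X,Y,DZ)`. -/
def theta3 (D : (Fin 6 → ℝ) →ₗ[ℝ] (Fin 6 → ℝ))
    (γ : AlternatingMap ℝ (Fin 6 → ℝ) ℝ (Fin 3)) (X Y Z : Fin 6 → ℝ) : ℝ :=
  -γ ![D X, Y, Z] - γ ![X, D Y, Z] - γ ![X, Y, D Z]

namespace Sl3Aux

def Efun (i j k : Fin 6) : ℝ :=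
  rhoPlusCoeff i j k - rhoPlusCoeff j i k - rhoPlusCoeff i k j
    - rhoPlusCoeff k j i + rhoPlusCoeff j k i + rhoPlusCoeff k i j

lemma Efun_swap01 (i j k : Fin 6) : Efun j i k = -Efun i j k := by unfold Efun; ring
lemma Efun_swap12 (i j k : Fin 6) : Efun i k j = -Efun i j k := by unfold Efun; ring
lemma Efun_swap02 (i j k : Fin 6) : Efun k j i = -Efun i j k := by unfold Efun; ring
lemma Efun_diag01 (i k : Fin 6) : Efun i i k = 0 := by unfold Efun; ring
lemma Efun_diag12 (i k : Fin 6) : Efun i k k = 0 := by unfold Efun; ring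
lemma Efun_diag02 (i k : Fin 6) : Efun i k i = 0 := by unfold Efun; ring

lemma rhoPlusCoeff_eq_zero {i j k : Fin 6} (h : ¬(i < j ∧ j < k)) : rhoPlusCoeff i j k = 0 := by
  unfold rhoPlusCoeff
  split_ifs with h1 h2 h3 h4
  · simp only [Prod.mk.injEq] at h1; obtain ⟨rfl, rfl, rfl⟩ := h1
    exact absurd ⟨by decide, by decide⟩ h
  · simp only [Prod.mk.injEq] at h2; obtain ⟨rfl, rfl, rfl⟩ := h2
    exact absurd ⟨by decide, by decide⟩ h
  · simp only [Prod.mk.injEq] at h3; obtain ⟨rfl, rfl, rfl⟩ := h3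
    exact absurd ⟨by decide, by decide⟩ h
  · simp only [Prod.mk.injEq] at h4; obtain ⟨rfl, rfl, rfl⟩ := h4
    exact absurd ⟨by decide, by decide⟩ h
  · rfl

lemma Efun_sorted {i j k : Fin 6} (hij : i < j) (hjk : j < k) :
    Efun i j k = rhoPlusCoeff i j k := by
  unfold Efun
  rw [rhoPlusCoeff_eq_zero (fun h => absurd h.1 (lt_asymm hij)),
    rhoPlusCoeff_eq_zero (fun h => absurd h.2 (lt_asymm hjk)),
    rhoPlusCoeff_eq_zero (fun h => absurd h.1 (lt_asymm hjk)),
    rhoPlusCoeff_eq_zero (fun h => absurd h.2 (lt_asymm (hij.trans hjk))),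
    rhoPlusCoeff_eq_zero (fun h => absurd h.1 (lt_asymm (hij.trans hjk)))]
  ring

lemma upd0 {α : Type*} (x y z w : α) : Function.update ![x, y, z] 0 w = ![w, y, z] := by
  funext i; fin_cases i <;> simp [Function.update]
lemma upd1 {α : Type*} (x y z w : α) : Function.update ![x, y, z] 1 w = ![x, w, z] := by
  funext i; fin_cases i <;> simp [Function.update]
lemma upd2 {α : Type*} (x y z w : α) : Function.update ![x, y, z] 2 w = ![x, y, w] := by
  funext i; fin_cases i <;> simp [Function.update]

variable (f : AlternatingMap ℝ (Fin 6 → ℝ) ℝ (Fin 3))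

lemma swap01 (x y z : Fin 6 → ℝ) : f ![y, x, z] = -f ![x, y, z] := by
  have h := f.map_swap (v := ![x, y, z]) (i := (0 : Fin 3)) (j := 1) (by decide)
  rw [← h]; congr 1; funext i; fin_cases i <;> simp [Equiv.swap_apply_def]
lemma swap12 (x y z : Fin 6 → ℝ) : f ![x, z, y] = -f ![x, y, z] := by
  have h := f.map_swap (v := ![x, y, z]) (i := (1 : Fin 3)) (j := 2) (by decide)
  rw [← h]; congr 1; funext i; fin_cases i <;> simp [Equiv.swap_apply_def]
lemma swap02 (x y z : Fin 6 → ℝ) : f ![z, y, x] = -f ![x, y, z] := by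
  have h := f.map_swap (v := ![x, y, z]) (i := (0 : Fin 3)) (j := 2) (by decide)
  rw [← h]; congr 1; funext i; fin_cases i <;> simp [Equiv.swap_apply_def]

lemma diag01 (x z : Fin 6 → ℝ) : f ![x, x, z] = 0 :=
  f.map_eq_zero_of_eq ![x, x, z] (i := 0) (j := 1) (by simp) (by decide)
lemma diag12 (x z : Fin 6 → ℝ) : f ![x, z, z] = 0 :=
  f.map_eq_zero_of_eq ![x, z, z] (i := 1) (j := 2) (by simp) (by decide)
lemma diag02 (x z : Fin 6 → ℝ) : f ![x, z, x] = 0 :=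
  f.map_eq_zero_of_eq ![x, z, x] (i := 0) (j := 2) (by simp) (by decide)

def slot0 (y z : Fin 6 → ℝ) : (Fin 6 → ℝ) →ₗ[ℝ] ℝ where
  toFun x := f ![x, y, z]
  map_add' a b := by
    have h := f.map_update_add ![a, y, z] 0 a b
    rwa [upd0, upd0, upd0] at h
  map_smul' r a := by
    have h := f.map_update_smul ![a, y, z] 0 r a
    rwa [upd0, upd0] at h

def slot1 (x z : Fin 6 → ℝ) : (Fin 6 → ℝ) →ₗ[ℝ] ℝ where
  toFun y := f ![x, y, z]
  map_add' a b := by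
    have h := f.map_update_add ![x, a, z] 1 a b
    rwa [upd1, upd1, upd1] at h
  map_smul' r a := by
    have h := f.map_update_smul ![x, a, z] 1 r a
    rwa [upd1, upd1] at h

def slot2 (x y : Fin 6 → ℝ) : (Fin 6 → ℝ) →ₗ[ℝ] ℝ where
  toFun z := f ![x, y, z]
  map_add' a b := by
    have h := f.map_update_add ![x, y, a] 2 a b
    rwa [upd2, upd2, upd2] at h
  map_smul' r a := by
    have h := f.map_update_smul ![x, y, a] 2 r a
    rwa [upd2, upd2] at h

def Sfun (d : Fin 6 → Fin 6 → ℝ) (a b c : Fin 6) : ℝ :=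
  (∑ i, d i a * Efun i b c) + (∑ i, d i b * Efun a i c) + (∑ i, d i c * Efun a b i)

lemma Sfun_swap01 (d : Fin 6 → Fin 6 → ℝ) (a b c : Fin 6) : Sfun d b a c = -Sfun d a b c := by
  unfold Sfun
  rw [Finset.sum_congr rfl (fun i _ => show d i b * Efun i a c = -(d i b * Efun a i c) by
      rw [Efun_swap01]; ring),
    Finset.sum_congr rfl (fun i _ => show d i a * Efun b i c = -(d i a * Efun i b c) by
      rw [Efun_swap01]; ring),
    Finset.sum_congr rfl (fun i _ => show d i c * Efun b a i = -(d i c * Efun a b i) by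
      rw [Efun_swap01]; ring),
    Finset.sum_neg_distrib, Finset.sum_neg_distrib, Finset.sum_neg_distrib]
  ring

lemma Sfun_swap12 (d : Fin 6 → Fin 6 → ℝ) (a b c : Fin 6) : Sfun d a c b = -Sfun d a b c := by
  unfold Sfun
  rw [Finset.sum_congr rfl (fun i _ => show d i a * Efun i c b = -(d i a * Efun i b c) by
      rw [Efun_swap12]; ring),
    Finset.sum_congr rfl (fun i _ => show d i c * Efun a i b = -(d i c * Efun a b i) by
      rw [Efun_swap12]; ring),
    Finset.sum_congr rfl (fun i _ => show d i b * Efun a c i = -(d i b * Efun a i c) by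
      rw [Efun_swap12]; ring),
    Finset.sum_neg_distrib, Finset.sum_neg_distrib, Finset.sum_neg_distrib]
  ring

lemma Sfun_diag01 (d : Fin 6 → Fin 6 → ℝ) (a c : Fin 6) : Sfun d a a c = 0 := by
  unfold Sfun
  rw [Finset.sum_congr rfl (fun i _ => show d i a * Efun i a c = -(d i a * Efun a i c) by
      rw [Efun_swap01]; ring),
    Finset.sum_congr rfl (fun i _ => show d i c * Efun a a i = 0 by
      rw [Efun_diag01]; ring),
    Finset.sum_neg_distrib, Finset.sum_const_zero]
  ring

lemma Sfun_diag12 (d : Fin 6 → Fin 6 → ℝ) (a b : Fin 6) : Sfun d a b b = 0 := by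
  unfold Sfun
  rw [Finset.sum_congr rfl (fun i _ => show d i a * Efun i b b = 0 by
      rw [Efun_diag12]; ring),
    Finset.sum_congr rfl (fun i _ => show d i b * Efun a i b = -(d i b * Efun a b i) by
      rw [Efun_swap12]; ring),
    Finset.sum_neg_distrib, Finset.sum_const_zero]
  ring

lemma Sfun_diag02 (d : Fin 6 → Fin 6 → ℝ) (a b : Fin 6) : Sfun d a b a = 0 := by
  unfold Sfun
  rw [Finset.sum_congr rfl (fun i _ => show d i a * Efun i b a = -(d i a * Efun a b i) by
      rw [Efun_swap02]; ring),
    Finset.sum_congr rfl (fun i _ => show d i b * Efun a i a = 0 by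
      rw [Efun_diag02]; ring),
    Finset.sum_neg_distrib, Finset.sum_const_zero]
  ring

lemma Sfun_all (d : Fin 6 → Fin 6 → ℝ)
    (h : ∀ a b c : Fin 6, a < b → b < c → Sfun d a b c = 0) (a b c : Fin 6) :
    Sfun d a b c = 0 := by
  rcases eq_or_ne a b with rfl | hab
  · exact Sfun_diag01 d a c
  rcases eq_or_ne b c with rfl | hbc
  · exact Sfun_diag12 d a b
  rcases eq_or_ne a c with rfl | hac
  · exact Sfun_diag02 d a b
  have s1 := Sfun_swap01 d a b c
  have s2 := Sfun_swap01 d a c b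
  have s3 := Sfun_swap01 d b c a
  have s4 := Sfun_swap12 d a b c
  have s5 := Sfun_swap12 d b a c
  have s6 := Sfun_swap12 d c a b
  rcases hab.lt_or_gt with h1 | h1 <;> rcases hbc.lt_or_gt with h2 | h2 <;>
    rcases hac.lt_or_gt with h3 | h3 <;>
    first
      | exact absurd (h1.trans h2) (lt_asymm h3)
      | exact absurd (h2.trans h1) (lt_asymm h3)
      | linarith [h a b c h1 h2]
      | linarith [h a c b h3 h2]
      | linarith [h c a b h3 h1]
      | linarith [h b a c h1 h3]
      | linarith [h b c a h2 h3]
      | linarith [h c b a h2 h1]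

lemma sorted20 {P : Fin 6 → Fin 6 → Fin 6 → Prop}
    (h012 : P 0 1 2) (h013 : P 0 1 3) (h014 : P 0 1 4) (h015 : P 0 1 5) (h023 : P 0 2 3) (h024 : P 0 2 4) (h025 : P 0 2 5) (h034 : P 0 3 4) (h035 : P 0 3 5) (h045 : P 0 4 5) (h123 : P 1 2 3) (h124 : P 1 2 4) (h125 : P 1 2 5) (h134 : P 1 3 4) (h135 : P 1 3 5) (h145 : P 1 4 5) (h234 : P 2 3 4) (h235 : P 2 3 5) (h245 : P 2 4 5) (h345 : P 3 4 5) :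
    ∀ a b c : Fin 6, a < b → b < c → P a b c := by
  intro a b c hab hbc
  fin_cases a <;> fin_cases b <;> fin_cases c <;>
    first
      | exact absurd hab (by decide)
      | exact absurd hbc (by decide)
      | exact h012
      | exact h013
      | exact h014
      | exact h015
      | exact h023
      | exact h024
      | exact h025
      | exact h034
      | exact h035
      | exact h045
      | exact h123
      | exact h124
      | exact h125
      | exact h134
      | exact h135
      | exact h145
      | exact h234
      | exact h235
      | exact h245
      | exact h345

end Sl3Aux

set_option maxHeartbeats 10000000

open Sl3Aux

/-- For the 3-form `ρ⁺ = e¹³⁵ − e¹⁴⁶ − e²³⁶ − e²⁴⁵` on `ℝ⁶` and the standard complex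
structure `J` (`J e₁ = e₂, J e₂ = −e₁, J e₃ = e₄, J e₄ = −e₃, J e₅ = e₆, J e₆ = −e₅`),
a linear endomorphism `D` of `ℝ⁶` satisfies `θ(D)ρ⁺ = 0` if and only if `D` is the real
representation of an element of `𝔰𝔩(3,ℂ)`, i.e. iff `D∘J = J∘D`, `tr D = 0` and
`tr(J∘D) = 0`. -/
theorem theta_rhoPlus_eq_zero_iff_sl3C
    (ρp : AlternatingMap ℝ (Fin 6 → ℝ) ℝ (Fin 3))
    (hρp : ∀ i j k : Fin 6, i < j → j < k →
      ρp ![stdB6 i, stdB6 j, stdB6 k] = rhoPlusCoeff i j k)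
    (J : (Fin 6 → ℝ) →ₗ[ℝ] (Fin 6 → ℝ))
    (hJ1 : J (stdB6 0) = stdB6 1) (hJ2 : J (stdB6 1) = -stdB6 0)
    (hJ3 : J (stdB6 2) = stdB6 3) (hJ4 : J (stdB6 3) = -stdB6 2)
    (hJ5 : J (stdB6 4) = stdB6 5) (hJ6 : J (stdB6 5) = -stdB6 4)
    (D : (Fin 6 → ℝ) →ₗ[ℝ] (Fin 6 → ℝ)) :
    (∀ X Y Z : Fin 6 → ℝ, theta3 D ρp X Y Z = 0) ↔
    (D ∘ₗ J = J ∘ₗ D ∧ LinearMap.trace ℝ (Fin 6 → ℝ) D = 0 ∧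
      LinearMap.trace ℝ (Fin 6 → ℝ) (J ∘ₗ D) = 0) := by
  classical
  have hbasis : ∀ X : Fin 6 → ℝ, X = ∑ i, X i • stdB6 i := by
    intro X
    funext j
    simp [stdB6, Pi.basisFun_apply, Finset.sum_apply, Pi.single_apply]
  -- values of ρp on all basis triples
  have hE : ∀ i j k : Fin 6, ρp ![stdB6 i, stdB6 j, stdB6 k] = Efun i j k := by
    intro i j k
    have hsorted : ∀ x y z : Fin 6, x < y → y < z →
        ρp ![stdB6 x, stdB6 y, stdB6 z] = Efun x y z := fun x y z hxy hyz => by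
      rw [hρp x y z hxy hyz, Efun_sorted hxy hyz]
    rcases eq_or_ne i j with rfl | hij
    · rw [diag01, Efun_diag01]
    rcases eq_or_ne j k with rfl | hjk
    · rw [diag12, Efun_diag12]
    rcases eq_or_ne i k with rfl | hik
    · rw [diag02, Efun_diag02]
    have t1 := swap01 ρp (stdB6 i) (stdB6 j) (stdB6 k)
    have t2 := swap01 ρp (stdB6 i) (stdB6 k) (stdB6 j)
    have t3 := swap01 ρp (stdB6 j) (stdB6 k) (stdB6 i)
    have t4 := swap12 ρp (stdB6 i) (stdB6 j) (stdB6 k)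
    have t5 := swap12 ρp (stdB6 j) (stdB6 i) (stdB6 k)
    have t6 := swap12 ρp (stdB6 k) (stdB6 i) (stdB6 j)
    have u1 := Efun_swap01 i j k
    have u2 := Efun_swap01 i k j
    have u3 := Efun_swap01 j k i
    have u4 := Efun_swap12 i j k
    have u5 := Efun_swap12 j i k
    have u6 := Efun_swap12 k i j
    rcases hij.lt_or_gt with h1 | h1 <;> rcases hjk.lt_or_gt with h2 | h2 <;>
      rcases hik.lt_or_gt with h3 | h3 <;>
      first
        | exact absurd (h1.trans h2) (lt_asymm h3)
        | exact absurd (h2.trans h1) (lt_asymm h3)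
        | linarith [hsorted i j k h1 h2]
        | linarith [hsorted i k j h3 h2]
        | linarith [hsorted k i j h3 h1]
        | linarith [hsorted j i k h1 h3]
        | linarith [hsorted j k i h2 h3]
        | linarith [hsorted k j i h2 h1]
  -- expansion of the three-term sum over basis vectors
  have hDe : ∀ a : Fin 6, D (stdB6 a) = ∑ i, D (stdB6 a) i • stdB6 i := fun a => hbasis _
  have p0 : ∀ a b c : Fin 6, ρp ![D (stdB6 a), stdB6 b, stdB6 c]
      = ∑ i, D (stdB6 a) i * Efun i b c := by
    intro a b c
    conv_lhs => rw [hDe a]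
    rw [show ρp ![∑ i, D (stdB6 a) i • stdB6 i, stdB6 b, stdB6 c]
        = slot0 ρp (stdB6 b) (stdB6 c) (∑ i, D (stdB6 a) i • stdB6 i) from rfl, map_sum]
    refine Finset.sum_congr rfl fun i _ => ?_
    rw [map_smul, smul_eq_mul,
      show slot0 ρp (stdB6 b) (stdB6 c) (stdB6 i) = ρp ![stdB6 i, stdB6 b, stdB6 c] from rfl,
      hE]
  have p1 : ∀ a b c : Fin 6, ρp ![stdB6 a, D (stdB6 b), stdB6 c]
      = ∑ i, D (stdB6 b) i * Efun a i c := by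
    intro a b c
    conv_lhs => rw [hDe b]
    rw [show ρp ![stdB6 a, ∑ i, D (stdB6 b) i • stdB6 i, stdB6 c]
        = slot1 ρp (stdB6 a) (stdB6 c) (∑ i, D (stdB6 b) i • stdB6 i) from rfl, map_sum]
    refine Finset.sum_congr rfl fun i _ => ?_
    rw [map_smul, smul_eq_mul,
      show slot1 ρp (stdB6 a) (stdB6 c) (stdB6 i) = ρp ![stdB6 a, stdB6 i, stdB6 c] from rfl,
      hE]
  have p2 : ∀ a b c : Fin 6, ρp ![stdB6 a, stdB6 b, D (stdB6 c)]
      = ∑ i, D (stdB6 c) i * Efun a b i := by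
    intro a b c
    conv_lhs => rw [hDe c]
    rw [show ρp ![stdB6 a, stdB6 b, ∑ i, D (stdB6 c) i • stdB6 i]
        = slot2 ρp (stdB6 a) (stdB6 b) (∑ i, D (stdB6 c) i • stdB6 i) from rfl, map_sum]
    refine Finset.sum_congr rfl fun i _ => ?_
    rw [map_smul, smul_eq_mul,
      show slot2 ρp (stdB6 a) (stdB6 b) (stdB6 i) = ρp ![stdB6 a, stdB6 b, stdB6 i] from rfl,
      hE]
  have hSexp : ∀ a b c : Fin 6,
      ρp ![D (stdB6 a), stdB6 b, stdB6 c] + ρp ![stdB6 a, D (stdB6 b), stdB6 c]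
        + ρp ![stdB6 a, stdB6 b, D (stdB6 c)]
      = Sfun (fun i a => D (stdB6 a) i) a b c := by
    intro a b c
    rw [p0, p1, p2]
    simp only [Sfun]
  -- the multilinear map T
  set T : MultilinearMap ℝ (fun _ : Fin 3 => (Fin 6 → ℝ)) ℝ :=
    ρp.toMultilinearMap.compLinearMap ![D, LinearMap.id, LinearMap.id]
    + ρp.toMultilinearMap.compLinearMap ![LinearMap.id, D, LinearMap.id]
    + ρp.toMultilinearMap.compLinearMap ![LinearMap.id, LinearMap.id, D] with hTdef
  have hT : ∀ X Y Z : Fin 6 → ℝ, T ![X, Y, Z]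
      = ρp ![D X, Y, Z] + ρp ![X, D Y, Z] + ρp ![X, Y, D Z] := by
    intro X Y Z
    have e1 : (fun i => ![D, LinearMap.id, LinearMap.id] i (![X, Y, Z] i)) = ![D X, Y, Z] := by
      funext i; fin_cases i <;> rfl
    have e2 : (fun i => ![LinearMap.id, D, LinearMap.id] i (![X, Y, Z] i)) = ![X, D Y, Z] := by
      funext i; fin_cases i <;> rfl
    have e3 : (fun i => ![LinearMap.id, LinearMap.id, D] i (![X, Y, Z] i)) = ![X, Y, D Z] := by
      funext i; fin_cases i <;> rfl
    rw [hTdef]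
    simp only [MultilinearMap.add_apply, MultilinearMap.compLinearMap_apply]
    rw [e1, e2, e3]
    simp
  -- main reduction
  have hmain : (∀ X Y Z : Fin 6 → ℝ, theta3 D ρp X Y Z = 0) ↔
      (∀ a b c : Fin 6, Sfun (fun i a => D (stdB6 a) i) a b c = 0) := by
    constructor
    · intro h a b c
      have h0 := h (stdB6 a) (stdB6 b) (stdB6 c)
      unfold theta3 at h0
      rw [← hSexp a b c]
      linarith
    · intro h X Y Z
      have hT0 : T = 0 := by
        apply Module.Basis.ext_multilinear (fun _ => Pi.basisFun ℝ (Fin 6))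
        intro v
        have hv : (fun i => Pi.basisFun ℝ (Fin 6) (v i))
            = ![stdB6 (v 0), stdB6 (v 1), stdB6 (v 2)] := by
          funext i; fin_cases i <;> rfl
        rw [hv, hT]
        simp only [MultilinearMap.zero_apply]
        rw [hSexp (v 0) (v 1) (v 2)]
        exact h (v 0) (v 1) (v 2)
      have h3 : ρp ![D X, Y, Z] + ρp ![X, D Y, Z] + ρp ![X, Y, D Z] = 0 := by
        rw [← hT X Y Z, hT0]
        simp
      unfold theta3
      linarith
  rw [hmain]
  have hJc : ∀ w : Fin 6 → ℝ, J w 0 = -(w 1) ∧ J w 1 = w 0 ∧ J w 2 = -(w 3)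
      ∧ J w 3 = w 2 ∧ J w 4 = -(w 5) ∧ J w 5 = w 4 := by
    intro w
    have hw : J w = w 0 • stdB6 1 + w 1 • (-stdB6 0) + w 2 • stdB6 3 + w 3 • (-stdB6 2)
        + w 4 • stdB6 5 + w 5 • (-stdB6 4) := by
      conv_lhs => rw [hbasis w, map_sum]
      rw [Fin.sum_univ_six]
      simp only [map_smul, hJ1, hJ2, hJ3, hJ4, hJ5, hJ6]
    refine ⟨?_, ?_, ?_, ?_, ?_, ?_⟩ <;> rw [hw] <;>
      simp [stdB6, Pi.basisFun_apply, Pi.single_apply] <;> try ring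
  have hcomm : (D ∘ₗ J = J ∘ₗ D) ↔ ∀ a : Fin 6, D (J (stdB6 a)) = J (D (stdB6 a)) := by
    constructor
    · intro h a
      simpa using LinearMap.congr_fun h (stdB6 a)
    · intro h
      refine (Pi.basisFun ℝ (Fin 6)).ext fun a => ?_
      simpa [stdB6] using h a
  have htr : LinearMap.trace ℝ (Fin 6 → ℝ) D = ∑ i, D (stdB6 i) i := by
    rw [LinearMap.trace_eq_matrix_trace ℝ (Pi.basisFun ℝ (Fin 6)) D, Matrix.trace]
    refine Finset.sum_congr rfl fun i _ => ?_
    rw [Matrix.diag_apply, LinearMap.toMatrix_apply, Pi.basisFun_repr]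
    rfl
  have htrJ : LinearMap.trace ℝ (Fin 6 → ℝ) (J ∘ₗ D) = ∑ i, J (D (stdB6 i)) i := by
    rw [LinearMap.trace_eq_matrix_trace ℝ (Pi.basisFun ℝ (Fin 6)) _, Matrix.trace]
    refine Finset.sum_congr rfl fun i _ => ?_
    rw [Matrix.diag_apply, LinearMap.toMatrix_apply, Pi.basisFun_repr]
    rfl
  constructor
  · intro h
    have q0 := h 0 1 2
    simp (config := { decide := true }) only [Sfun, Efun, rhoPlusCoeff,
      Fin.sum_univ_six, Prod.mk.injEq, ite_true, ite_false] at q0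
    have q1 := h 0 1 3
    simp (config := { decide := true }) only [Sfun, Efun, rhoPlusCoeff,
      Fin.sum_univ_six, Prod.mk.injEq, ite_true, ite_false] at q1
    have q2 := h 0 1 4
    simp (config := { decide := true }) only [Sfun, Efun, rhoPlusCoeff,
      Fin.sum_univ_six, Prod.mk.injEq, ite_true, ite_false] at q2
    have q3 := h 0 1 5
    simp (config := { decide := true }) only [Sfun, Efun, rhoPlusCoeff,
      Fin.sum_univ_six, Prod.mk.injEq, ite_true, ite_false] at q3
    have q4 := h 0 2 3
    simp (config := { decide := true }) only [Sfun, Efun, rhoPlusCoeff,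
      Fin.sum_univ_six, Prod.mk.injEq, ite_true, ite_false] at q4
    have q5 := h 0 2 4
    simp (config := { decide := true }) only [Sfun, Efun, rhoPlusCoeff,
      Fin.sum_univ_six, Prod.mk.injEq, ite_true, ite_false] at q5
    have q6 := h 0 2 5
    simp (config := { decide := true }) only [Sfun, Efun, rhoPlusCoeff,
      Fin.sum_univ_six, Prod.mk.injEq, ite_true, ite_false] at q6
    have q7 := h 0 3 4
    simp (config := { decide := true }) only [Sfun, Efun, rhoPlusCoeff,
      Fin.sum_univ_six, Prod.mk.injEq, ite_true, ite_false] at q7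
    have q8 := h 0 3 5
    simp (config := { decide := true }) only [Sfun, Efun, rhoPlusCoeff,
      Fin.sum_univ_six, Prod.mk.injEq, ite_true, ite_false] at q8
    have q9 := h 0 4 5
    simp (config := { decide := true }) only [Sfun, Efun, rhoPlusCoeff,
      Fin.sum_univ_six, Prod.mk.injEq, ite_true, ite_false] at q9
    have q10 := h 1 2 3
    simp (config := { decide := true }) only [Sfun, Efun, rhoPlusCoeff,
      Fin.sum_univ_six, Prod.mk.injEq, ite_true, ite_false] at q10
    have q11 := h 1 2 4
    simp (config := { decide := true }) only [Sfun, Efun, rhoPlusCoeff,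
      Fin.sum_univ_six, Prod.mk.injEq, ite_true, ite_false] at q11
    have q12 := h 1 2 5
    simp (config := { decide := true }) only [Sfun, Efun, rhoPlusCoeff,
      Fin.sum_univ_six, Prod.mk.injEq, ite_true, ite_false] at q12
    have q13 := h 1 3 4
    simp (config := { decide := true }) only [Sfun, Efun, rhoPlusCoeff,
      Fin.sum_univ_six, Prod.mk.injEq, ite_true, ite_false] at q13
    have q14 := h 1 3 5
    simp (config := { decide := true }) only [Sfun, Efun, rhoPlusCoeff,
      Fin.sum_univ_six, Prod.mk.injEq, ite_true, ite_false] at q14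
    have q15 := h 1 4 5
    simp (config := { decide := true }) only [Sfun, Efun, rhoPlusCoeff,
      Fin.sum_univ_six, Prod.mk.injEq, ite_true, ite_false] at q15
    have q16 := h 2 3 4
    simp (config := { decide := true }) only [Sfun, Efun, rhoPlusCoeff,
      Fin.sum_univ_six, Prod.mk.injEq, ite_true, ite_false] at q16
    have q17 := h 2 3 5
    simp (config := { decide := true }) only [Sfun, Efun, rhoPlusCoeff,
      Fin.sum_univ_six, Prod.mk.injEq, ite_true, ite_false] at q17
    have q18 := h 2 4 5
    simp (config := { decide := true }) only [Sfun, Efun, rhoPlusCoeff,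
      Fin.sum_univ_six, Prod.mk.injEq, ite_true, ite_false] at q18
    have q19 := h 3 4 5
    simp (config := { decide := true }) only [Sfun, Efun, rhoPlusCoeff,
      Fin.sum_univ_six, Prod.mk.injEq, ite_true, ite_false] at q19
    have s00 : D (stdB6 1) 0 = J (D (stdB6 0)) 0 := by
      rw [(hJc (D (stdB6 0))).1]
      linear_combination - (1/2) * q6 - (1/2) * q7 + (1/2) * q11 - (1/2) * q14
    have s01 : D (stdB6 1) 1 = J (D (stdB6 0)) 1 := by
      rw [(hJc (D (stdB6 0))).2.1]
      linear_combination - (1/2) * q5 + (1/2) * q8 - (1/2) * q12 - (1/2) * q13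
    have s02 : D (stdB6 1) 2 = J (D (stdB6 0)) 2 := by
      rw [(hJc (D (stdB6 0))).2.2.1]
      linear_combination q2
    have s03 : D (stdB6 1) 3 = J (D (stdB6 0)) 3 := by
      rw [(hJc (D (stdB6 0))).2.2.2.1]
      linear_combination - q3
    have s04 : D (stdB6 1) 4 = J (D (stdB6 0)) 4 := by
      rw [(hJc (D (stdB6 0))).2.2.2.2.1]
      linear_combination - q0
    have s05 : D (stdB6 1) 5 = J (D (stdB6 0)) 5 := by
      rw [(hJc (D (stdB6 0))).2.2.2.2.2]
      linear_combination q1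
    have s10 : (-(D (stdB6 0))) 0 = J (D (stdB6 1)) 0 := by
      rw [(hJc (D (stdB6 1))).1]
      simp only [Pi.neg_apply]
      linear_combination - (1/2) * q5 + (1/2) * q8 - (1/2) * q12 - (1/2) * q13
    have s11 : (-(D (stdB6 0))) 1 = J (D (stdB6 1)) 1 := by
      rw [(hJc (D (stdB6 1))).2.1]
      simp only [Pi.neg_apply]
      linear_combination (1/2) * q6 + (1/2) * q7 - (1/2) * q11 + (1/2) * q14
    have s12 : (-(D (stdB6 0))) 2 = J (D (stdB6 1)) 2 := by
      rw [(hJc (D (stdB6 1))).2.2.1]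
      simp only [Pi.neg_apply]
      linear_combination - q3
    have s13 : (-(D (stdB6 0))) 3 = J (D (stdB6 1)) 3 := by
      rw [(hJc (D (stdB6 1))).2.2.2.1]
      simp only [Pi.neg_apply]
      linear_combination - q2
    have s14 : (-(D (stdB6 0))) 4 = J (D (stdB6 1)) 4 := by
      rw [(hJc (D (stdB6 1))).2.2.2.2.1]
      simp only [Pi.neg_apply]
      linear_combination q1
    have s15 : (-(D (stdB6 0))) 5 = J (D (stdB6 1)) 5 := by
      rw [(hJc (D (stdB6 1))).2.2.2.2.2]
      simp only [Pi.neg_apply]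
      linear_combination q0
    have s20 : D (stdB6 3) 0 = J (D (stdB6 2)) 0 := by
      rw [(hJc (D (stdB6 2))).1]
      linear_combination - q16
    have s21 : D (stdB6 3) 1 = J (D (stdB6 2)) 1 := by
      rw [(hJc (D (stdB6 2))).2.1]
      linear_combination q17
    have s22 : D (stdB6 3) 2 = J (D (stdB6 2)) 2 := by
      rw [(hJc (D (stdB6 2))).2.2.1]
      linear_combination - (1/2) * q6 + (1/2) * q7 - (1/2) * q11 - (1/2) * q14
    have s23 : D (stdB6 3) 3 = J (D (stdB6 2)) 3 := by
      rw [(hJc (D (stdB6 2))).2.2.2.1]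
      linear_combination - (1/2) * q5 - (1/2) * q8 + (1/2) * q12 - (1/2) * q13
    have s24 : D (stdB6 3) 4 = J (D (stdB6 2)) 4 := by
      rw [(hJc (D (stdB6 2))).2.2.2.2.1]
      linear_combination q4
    have s25 : D (stdB6 3) 5 = J (D (stdB6 2)) 5 := by
      rw [(hJc (D (stdB6 2))).2.2.2.2.2]
      linear_combination - q10
    have s30 : (-(D (stdB6 2))) 0 = J (D (stdB6 3)) 0 := by
      rw [(hJc (D (stdB6 3))).1]
      simp only [Pi.neg_apply]
      linear_combination q17
    have s31 : (-(D (stdB6 2))) 1 = J (D (stdB6 3)) 1 := by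
      rw [(hJc (D (stdB6 3))).2.1]
      simp only [Pi.neg_apply]
      linear_combination q16
    have s32 : (-(D (stdB6 2))) 2 = J (D (stdB6 3)) 2 := by
      rw [(hJc (D (stdB6 3))).2.2.1]
      simp only [Pi.neg_apply]
      linear_combination - (1/2) * q5 - (1/2) * q8 + (1/2) * q12 - (1/2) * q13
    have s33 : (-(D (stdB6 2))) 3 = J (D (stdB6 3)) 3 := by
      rw [(hJc (D (stdB6 3))).2.2.2.1]
      simp only [Pi.neg_apply]
      linear_combination (1/2) * q6 - (1/2) * q7 + (1/2) * q11 + (1/2) * q14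
    have s34 : (-(D (stdB6 2))) 4 = J (D (stdB6 3)) 4 := by
      rw [(hJc (D (stdB6 3))).2.2.2.2.1]
      simp only [Pi.neg_apply]
      linear_combination - q10
    have s35 : (-(D (stdB6 2))) 5 = J (D (stdB6 3)) 5 := by
      rw [(hJc (D (stdB6 3))).2.2.2.2.2]
      simp only [Pi.neg_apply]
      linear_combination - q4
    have s40 : D (stdB6 5) 0 = J (D (stdB6 4)) 0 := by
      rw [(hJc (D (stdB6 4))).1]
      linear_combination q18
    have s41 : D (stdB6 5) 1 = J (D (stdB6 4)) 1 := by
      rw [(hJc (D (stdB6 4))).2.1]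
      linear_combination - q19
    have s42 : D (stdB6 5) 2 = J (D (stdB6 4)) 2 := by
      rw [(hJc (D (stdB6 4))).2.2.1]
      linear_combination - q9
    have s43 : D (stdB6 5) 3 = J (D (stdB6 4)) 3 := by
      rw [(hJc (D (stdB6 4))).2.2.2.1]
      linear_combination q15
    have s44 : D (stdB6 5) 4 = J (D (stdB6 4)) 4 := by
      rw [(hJc (D (stdB6 4))).2.2.2.2.1]
      linear_combination (1/2) * q6 - (1/2) * q7 - (1/2) * q11 - (1/2) * q14
    have s45 : D (stdB6 5) 5 = J (D (stdB6 4)) 5 := by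
      rw [(hJc (D (stdB6 4))).2.2.2.2.2]
      linear_combination - (1/2) * q5 - (1/2) * q8 - (1/2) * q12 + (1/2) * q13
    have s50 : (-(D (stdB6 4))) 0 = J (D (stdB6 5)) 0 := by
      rw [(hJc (D (stdB6 5))).1]
      simp only [Pi.neg_apply]
      linear_combination - q19
    have s51 : (-(D (stdB6 4))) 1 = J (D (stdB6 5)) 1 := by
      rw [(hJc (D (stdB6 5))).2.1]
      simp only [Pi.neg_apply]
      linear_combination - q18
    have s52 : (-(D (stdB6 4))) 2 = J (D (stdB6 5)) 2 := by
      rw [(hJc (D (stdB6 5))).2.2.1]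
      simp only [Pi.neg_apply]
      linear_combination q15
    have s53 : (-(D (stdB6 4))) 3 = J (D (stdB6 5)) 3 := by
      rw [(hJc (D (stdB6 5))).2.2.2.1]
      simp only [Pi.neg_apply]
      linear_combination q9
    have s54 : (-(D (stdB6 4))) 4 = J (D (stdB6 5)) 4 := by
      rw [(hJc (D (stdB6 5))).2.2.2.2.1]
      simp only [Pi.neg_apply]
      linear_combination - (1/2) * q5 - (1/2) * q8 - (1/2) * q12 + (1/2) * q13
    have s55 : (-(D (stdB6 4))) 5 = J (D (stdB6 5)) 5 := by
      rw [(hJc (D (stdB6 5))).2.2.2.2.2]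
      simp only [Pi.neg_apply]
      linear_combination - (1/2) * q6 + (1/2) * q7 + (1/2) * q11 + (1/2) * q14
    have A0 : D (J (stdB6 0)) = J (D (stdB6 0)) := by
      rw [hJ1]
      funext i
      fin_cases i
      · exact s00
      · exact s01
      · exact s02
      · exact s03
      · exact s04
      · exact s05
    have A1 : D (J (stdB6 1)) = J (D (stdB6 1)) := by
      rw [hJ2, map_neg]
      funext i
      fin_cases i
      · exact s10
      · exact s11
      · exact s12
      · exact s13
      · exact s14
      · exact s15
    have A2 : D (J (stdB6 2)) = J (D (stdB6 2)) := by
      rw [hJ3]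
      funext i
      fin_cases i
      · exact s20
      · exact s21
      · exact s22
      · exact s23
      · exact s24
      · exact s25
    have A3 : D (J (stdB6 3)) = J (D (stdB6 3)) := by
      rw [hJ4, map_neg]
      funext i
      fin_cases i
      · exact s30
      · exact s31
      · exact s32
      · exact s33
      · exact s34
      · exact s35
    have A4 : D (J (stdB6 4)) = J (D (stdB6 4)) := by
      rw [hJ5]
      funext i
      fin_cases i
      · exact s40
      · exact s41
      · exact s42
      · exact s43
      · exact s44
      · exact s45
    have A5 : D (J (stdB6 5)) = J (D (stdB6 5)) := by
      rw [hJ6, map_neg]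
      funext i
      fin_cases i
      · exact s50
      · exact s51
      · exact s52
      · exact s53
      · exact s54
      · exact s55
    refine ⟨hcomm.mpr fun a => ?_, ?_, ?_⟩
    · fin_cases a
      · exact A0
      · exact A1
      · exact A2
      · exact A3
      · exact A4
      · exact A5
    · rw [htr, Fin.sum_univ_six]
      linear_combination (1/2) * q5 - (1/2) * q8 - (1/2) * q12 - (1/2) * q13
    · rw [htrJ, Fin.sum_univ_six,
        (hJc (D (stdB6 0))).1,
        (hJc (D (stdB6 1))).2.1,
        (hJc (D (stdB6 2))).2.2.1,
        (hJc (D (stdB6 3))).2.2.2.1,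
        (hJc (D (stdB6 4))).2.2.2.2.1,
        (hJc (D (stdB6 5))).2.2.2.2.2]
      linear_combination (1/2) * q6 + (1/2) * q7 + (1/2) * q11 - (1/2) * q14
  · rintro ⟨hC, hT1, hT2⟩
    rw [htr, Fin.sum_univ_six] at hT1
    rw [htrJ, Fin.sum_univ_six,
        (hJc (D (stdB6 0))).1,
        (hJc (D (stdB6 1))).2.1,
        (hJc (D (stdB6 2))).2.2.1,
        (hJc (D (stdB6 3))).2.2.2.1,
        (hJc (D (stdB6 4))).2.2.2.2.1,
        (hJc (D (stdB6 5))).2.2.2.2.2] at hT2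
    have hC' := hcomm.mp hC
    have k0 := hC' 0
    rw [hJ1] at k0
    have c00 := congrFun k0 (0 : Fin 6)
    rw [(hJc (D (stdB6 0))).1] at c00
    have c01 := congrFun k0 (1 : Fin 6)
    rw [(hJc (D (stdB6 0))).2.1] at c01
    have c02 := congrFun k0 (2 : Fin 6)
    rw [(hJc (D (stdB6 0))).2.2.1] at c02
    have c03 := congrFun k0 (3 : Fin 6)
    rw [(hJc (D (stdB6 0))).2.2.2.1] at c03
    have c04 := congrFun k0 (4 : Fin 6)
    rw [(hJc (D (stdB6 0))).2.2.2.2.1] at c04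
    have c05 := congrFun k0 (5 : Fin 6)
    rw [(hJc (D (stdB6 0))).2.2.2.2.2] at c05
    have k1 := hC' 1
    rw [hJ2, map_neg] at k1
    have c10 := congrFun k1 (0 : Fin 6)
    rw [(hJc (D (stdB6 1))).1] at c10
    simp only [Pi.neg_apply] at c10
    have c11 := congrFun k1 (1 : Fin 6)
    rw [(hJc (D (stdB6 1))).2.1] at c11
    simp only [Pi.neg_apply] at c11
    have c12 := congrFun k1 (2 : Fin 6)
    rw [(hJc (D (stdB6 1))).2.2.1] at c12
    simp only [Pi.neg_apply] at c12
    have c13 := congrFun k1 (3 : Fin 6)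
    rw [(hJc (D (stdB6 1))).2.2.2.1] at c13
    simp only [Pi.neg_apply] at c13
    have c14 := congrFun k1 (4 : Fin 6)
    rw [(hJc (D (stdB6 1))).2.2.2.2.1] at c14
    simp only [Pi.neg_apply] at c14
    have c15 := congrFun k1 (5 : Fin 6)
    rw [(hJc (D (stdB6 1))).2.2.2.2.2] at c15
    simp only [Pi.neg_apply] at c15
    have k2 := hC' 2
    rw [hJ3] at k2
    have c20 := congrFun k2 (0 : Fin 6)
    rw [(hJc (D (stdB6 2))).1] at c20
    have c21 := congrFun k2 (1 : Fin 6)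
    rw [(hJc (D (stdB6 2))).2.1] at c21
    have c22 := congrFun k2 (2 : Fin 6)
    rw [(hJc (D (stdB6 2))).2.2.1] at c22
    have c23 := congrFun k2 (3 : Fin 6)
    rw [(hJc (D (stdB6 2))).2.2.2.1] at c23
    have c24 := congrFun k2 (4 : Fin 6)
    rw [(hJc (D (stdB6 2))).2.2.2.2.1] at c24
    have c25 := congrFun k2 (5 : Fin 6)
    rw [(hJc (D (stdB6 2))).2.2.2.2.2] at c25
    have k3 := hC' 3
    rw [hJ4, map_neg] at k3
    have c30 := congrFun k3 (0 : Fin 6)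
    rw [(hJc (D (stdB6 3))).1] at c30
    simp only [Pi.neg_apply] at c30
    have c31 := congrFun k3 (1 : Fin 6)
    rw [(hJc (D (stdB6 3))).2.1] at c31
    simp only [Pi.neg_apply] at c31
    have c32 := congrFun k3 (2 : Fin 6)
    rw [(hJc (D (stdB6 3))).2.2.1] at c32
    simp only [Pi.neg_apply] at c32
    have c33 := congrFun k3 (3 : Fin 6)
    rw [(hJc (D (stdB6 3))).2.2.2.1] at c33
    simp only [Pi.neg_apply] at c33
    have c34 := congrFun k3 (4 : Fin 6)
    rw [(hJc (D (stdB6 3))).2.2.2.2.1] at c34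
    simp only [Pi.neg_apply] at c34
    have c35 := congrFun k3 (5 : Fin 6)
    rw [(hJc (D (stdB6 3))).2.2.2.2.2] at c35
    simp only [Pi.neg_apply] at c35
    have k4 := hC' 4
    rw [hJ5] at k4
    have c40 := congrFun k4 (0 : Fin 6)
    rw [(hJc (D (stdB6 4))).1] at c40
    have c41 := congrFun k4 (1 : Fin 6)
    rw [(hJc (D (stdB6 4))).2.1] at c41
    have c42 := congrFun k4 (2 : Fin 6)
    rw [(hJc (D (stdB6 4))).2.2.1] at c42
    have c43 := congrFun k4 (3 : Fin 6)
    rw [(hJc (D (stdB6 4))).2.2.2.1] at c43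
    have c44 := congrFun k4 (4 : Fin 6)
    rw [(hJc (D (stdB6 4))).2.2.2.2.1] at c44
    have c45 := congrFun k4 (5 : Fin 6)
    rw [(hJc (D (stdB6 4))).2.2.2.2.2] at c45
    have k5 := hC' 5
    rw [hJ6, map_neg] at k5
    have c50 := congrFun k5 (0 : Fin 6)
    rw [(hJc (D (stdB6 5))).1] at c50
    simp only [Pi.neg_apply] at c50
    have c51 := congrFun k5 (1 : Fin 6)
    rw [(hJc (D (stdB6 5))).2.1] at c51
    simp only [Pi.neg_apply] at c51
    have c52 := congrFun k5 (2 : Fin 6)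
    rw [(hJc (D (stdB6 5))).2.2.1] at c52
    simp only [Pi.neg_apply] at c52
    have c53 := congrFun k5 (3 : Fin 6)
    rw [(hJc (D (stdB6 5))).2.2.2.1] at c53
    simp only [Pi.neg_apply] at c53
    have c54 := congrFun k5 (4 : Fin 6)
    rw [(hJc (D (stdB6 5))).2.2.2.2.1] at c54
    simp only [Pi.neg_apply] at c54
    have c55 := congrFun k5 (5 : Fin 6)
    rw [(hJc (D (stdB6 5))).2.2.2.2.2] at c55
    simp only [Pi.neg_apply] at c55
    refine Sfun_all _ (sorted20 ?_ ?_ ?_ ?_ ?_ ?_ ?_ ?_ ?_ ?_ ?_ ?_ ?_ ?_ ?_ ?_ ?_ ?_ ?_ ?_)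
    · simp (config := { decide := true }) only [Sfun, Efun, rhoPlusCoeff,
        Fin.sum_univ_six, Prod.mk.injEq, ite_true, ite_false]
      linear_combination - c04
    · simp (config := { decide := true }) only [Sfun, Efun, rhoPlusCoeff,
        Fin.sum_univ_six, Prod.mk.injEq, ite_true, ite_false]
      linear_combination c05
    · simp (config := { decide := true }) only [Sfun, Efun, rhoPlusCoeff,
        Fin.sum_univ_six, Prod.mk.injEq, ite_true, ite_false]
      linear_combination c02
    · simp (config := { decide := true }) only [Sfun, Efun, rhoPlusCoeff,
        Fin.sum_univ_six, Prod.mk.injEq, ite_true, ite_false]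
      linear_combination - c03
    · simp (config := { decide := true }) only [Sfun, Efun, rhoPlusCoeff,
        Fin.sum_univ_six, Prod.mk.injEq, ite_true, ite_false]
      linear_combination c24
    · simp (config := { decide := true }) only [Sfun, Efun, rhoPlusCoeff,
        Fin.sum_univ_six, Prod.mk.injEq, ite_true, ite_false]
      linear_combination - (1/2) * c01 - (1/2) * c23 - (1/2) * c45 + (1/2) * hT1
    · simp (config := { decide := true }) only [Sfun, Efun, rhoPlusCoeff,
        Fin.sum_univ_six, Prod.mk.injEq, ite_true, ite_false]
      linear_combination - (1/2) * c00 - (1/2) * c22 + (1/2) * c44 + (1/2) * hT2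
    · simp (config := { decide := true }) only [Sfun, Efun, rhoPlusCoeff,
        Fin.sum_univ_six, Prod.mk.injEq, ite_true, ite_false]
      linear_combination - (1/2) * c00 + (1/2) * c22 - (1/2) * c44 + (1/2) * hT2
    · simp (config := { decide := true }) only [Sfun, Efun, rhoPlusCoeff,
        Fin.sum_univ_six, Prod.mk.injEq, ite_true, ite_false]
      linear_combination (1/2) * c01 - (1/2) * c23 - (1/2) * c45 - (1/2) * hT1
    · simp (config := { decide := true }) only [Sfun, Efun, rhoPlusCoeff,
        Fin.sum_univ_six, Prod.mk.injEq, ite_true, ite_false]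
      linear_combination - c42
    · simp (config := { decide := true }) only [Sfun, Efun, rhoPlusCoeff,
        Fin.sum_univ_six, Prod.mk.injEq, ite_true, ite_false]
      linear_combination - c25
    · simp (config := { decide := true }) only [Sfun, Efun, rhoPlusCoeff,
        Fin.sum_univ_six, Prod.mk.injEq, ite_true, ite_false]
      linear_combination (1/2) * c00 - (1/2) * c22 - (1/2) * c44 + (1/2) * hT2
    · simp (config := { decide := true }) only [Sfun, Efun, rhoPlusCoeff,
        Fin.sum_univ_six, Prod.mk.injEq, ite_true, ite_false]
      linear_combination - (1/2) * c01 + (1/2) * c23 - (1/2) * c45 - (1/2) * hT1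
    · simp (config := { decide := true }) only [Sfun, Efun, rhoPlusCoeff,
        Fin.sum_univ_six, Prod.mk.injEq, ite_true, ite_false]
      linear_combination - (1/2) * c01 - (1/2) * c23 + (1/2) * c45 - (1/2) * hT1
    · simp (config := { decide := true }) only [Sfun, Efun, rhoPlusCoeff,
        Fin.sum_univ_six, Prod.mk.injEq, ite_true, ite_false]
      linear_combination - (1/2) * c00 - (1/2) * c22 - (1/2) * c44 - (1/2) * hT2
    · simp (config := { decide := true }) only [Sfun, Efun, rhoPlusCoeff,
        Fin.sum_univ_six, Prod.mk.injEq, ite_true, ite_false]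
      linear_combination c43
    · simp (config := { decide := true }) only [Sfun, Efun, rhoPlusCoeff,
        Fin.sum_univ_six, Prod.mk.injEq, ite_true, ite_false]
      linear_combination - c20
    · simp (config := { decide := true }) only [Sfun, Efun, rhoPlusCoeff,
        Fin.sum_univ_six, Prod.mk.injEq, ite_true, ite_false]
      linear_combination c21
    · simp (config := { decide := true }) only [Sfun, Efun, rhoPlusCoeff,
        Fin.sum_univ_six, Prod.mk.injEq, ite_true, ite_false]
      linear_combination c40
    · simp (config := { decide := true }) only [Sfun, Efun, rhoPlusCoeff,
        Fin.sum_univ_six, Prod.mk.injEq, ite_true, ite_false]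
      linear_combination - c41
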